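/- Let X be a real Hilbert space, 0 < α ≤ 1, and ψ_α(x) = |x|^{1+α}/(1+α). Then for all z, h ∈ X and λ ∈ [0,1]: λψ_α(z+(1−λ)h) + (1−λ)ψ_α(z−λh) − ψ_α(z) ≤ 2^{1−α}·λ(1−λ)·|h|^{1+α}/(1+α). -/

import Mathlib

open Set Real

lemma jensen2 {s w v a b : ℝ} (hs0 : 0 ≤ s) (hs1 : s ≤ 1) (hw : 0 ≤ w) (hv : 0 ≤ v)
    (hwv : w + v = 1) (ha : 0 ≤ a) (hb : 0 ≤ b) :
    w * a ^ s + v * b ^ s ≤ (w * a + v * b) ^ s := by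
  have := (Real.concaveOn_rpow hs0 hs1).2 (mem_Ici.2 ha) (mem_Ici.2 hb) hw hv hwv
  simpa [smul_eq_mul] using this

lemma two_point {α x y : ℝ} (hα : 0 < α) (hα1 : α ≤ 1) (hx : 0 ≤ x) (hy : 0 ≤ y) :
    x ^ α + y ^ α ≤ 2 ^ (1 - α) * (x + y) ^ α := by
  have h := jensen2 (s := α) (w := 1/2) (v := 1/2) (a := x) (b := y)
    hα.le hα1 (by norm_num) (by norm_num) (by norm_num) hx hy
  have h2 : ((1:ℝ)/2) * x + (1/2) * y = (x+y)/2 := by ring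
  rw [h2, Real.div_rpow (by linarith) (by norm_num)] at h
  have hK : (2:ℝ) ^ (1 - α) = 2 / 2 ^ α := by
    rw [Real.rpow_sub (by norm_num), Real.rpow_one]
  rw [hK]
  have h2α : (0:ℝ) < 2 ^ α := Real.rpow_pos_of_pos (by norm_num) _
  rw [div_mul_eq_mul_div, le_div_iff₀ h2α]
  have := mul_le_mul_of_nonneg_right h h2α.le
  rw [div_mul_cancel₀ _ (ne_of_gt h2α)] at this
  nlinarith [this]

lemma rpow_one_add'' {x α : ℝ} (hx : 0 ≤ x) (hα : 0 < α) : x ^ (1+α) = x * x ^ α := by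
  rcases eq_or_lt_of_le hx with h | h
  · rw [← h, Real.zero_rpow (by linarith), Real.zero_rpow (by linarith), mul_zero]
  · rw [Real.rpow_add h, Real.rpow_one]

lemma K_ge_one {α : ℝ} (hα : 0 < α) (hα1 : α ≤ 1) : (1:ℝ) ≤ 2 ^ (1-α) := by
  calc (1:ℝ) = 2 ^ (0:ℝ) := by rw [Real.rpow_zero]
  _ ≤ 2 ^ (1-α) := Real.rpow_le_rpow_of_exponent_le (by norm_num) (by linarith)

lemma self_le_rpow {x α : ℝ} (hx : 0 ≤ x) (hx1 : x ≤ 1) (hα : 0 < α) (hα1 : α ≤ 1) :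
    x ≤ x ^ α := by
  rcases eq_or_lt_of_le hx with h | h
  · rw [← h, Real.zero_rpow (by linarith)]
  · calc x = x ^ (1:ℝ) := (Real.rpow_one x).symm
    _ ≤ x ^ α := Real.rpow_le_rpow_of_exponent_ge h hx1 hα1

lemma star_half {α l u : ℝ} (hα : 0 < α) (hα1 : α ≤ 1)
    (hl0 : 0 ≤ l) (hl1 : l ≤ 1) (hu : 1 - l ≤ u) (hu1 : u ≤ 1) :
    l * u ^ (1+α) + (1-l) * (1-u) ^ (1+α) - (u - (1-l)) ^ (1+α)
      ≤ 2 ^ (1-α) * (l * (1-l)) := by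
  set p : ℝ := 1 + α with hp
  have hp1 : (1:ℝ) ≤ p := by rw [hp]; linarith
  have hp0 : (0:ℝ) < p := by linarith
  set m : ℝ := 1 - l with hm
  have hm0 : 0 ≤ m := by rw [hm]; linarith
  have hK1 : (1:ℝ) ≤ 2 ^ (1-α) := K_ge_one hα hα1
  set φ : ℝ → ℝ := fun x => l * x ^ p + m * (1-x) ^ p - (x - m) ^ p with hφ
  -- differentiability everywhere
  have hder : ∀ x : ℝ, HasDerivAt φ
      (l * (p * x ^ (p-1)) + m * (p * (1-x) ^ (p-1) * (-1)) - p * (x-m) ^ (p-1) * 1) x := by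
    intro x
    have h1 : HasDerivAt (fun y : ℝ => y ^ p) (p * x ^ (p-1)) x :=
      Real.hasDerivAt_rpow_const (Or.inr hp1)
    have h2 : HasDerivAt (fun y : ℝ => 1 - y) (-1) x := by
      simpa using (hasDerivAt_id x).const_sub 1
    have h3 : HasDerivAt (fun y : ℝ => (1-y) ^ p) (p * (1-x) ^ (p-1) * (-1)) x :=
      (Real.hasDerivAt_rpow_const (x := 1-x) (Or.inr hp1)).comp x h2
    have h4' : HasDerivAt (fun y : ℝ => y - m) 1 x := (hasDerivAt_id x).sub_const m
    have h4 : HasDerivAt (fun y : ℝ => (y-m) ^ p) (p * (x-m) ^ (p-1) * 1) x :=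
      by have := (Real.hasDerivAt_rpow_const (x := x-m) (Or.inr hp1)).comp x h4'; exact this
    exact ((h1.const_mul l).add (h3.const_mul m)).sub h4
  -- value bounds at endpoints
  have hφm : φ m ≤ 2 ^ (1-α) * (l * m) := by
    have hv : φ m = l * (m * m ^ α) + m * (l * l ^ α) := by
      simp only [hφ]
      rw [show m - m = (0:ℝ) by ring, Real.zero_rpow (by linarith),
        show (1:ℝ) - m = l by rw [hm]; ring, hp,
        rpow_one_add'' hm0 hα, rpow_one_add'' hl0 hα]
      ring
    rw [hv]
    have h2 := two_point hα hα1 hm0 hl0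
    rw [show m + l = 1 by rw [hm]; ring, Real.one_rpow, mul_one] at h2
    have hmul := mul_le_mul_of_nonneg_left h2 (mul_nonneg hl0 hm0)
    linarith [hmul]
  have hφ1 : φ 1 ≤ 2 ^ (1-α) * (l * m) := by
    have hv : φ 1 = l - l * l ^ α := by
      simp only [hφ]
      rw [show (1:ℝ) - 1 = 0 by ring, Real.zero_rpow (by linarith), Real.one_rpow,
        show (1:ℝ) - m = l by rw [hm]; ring, hp, rpow_one_add'' hl0 hα]
      ring
    rw [hv]
    have h1 : l ≤ l ^ α := self_le_rpow hl0 hl1 hα hα1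
    have e1 := mul_le_mul_of_nonneg_left h1 hl0
    have e2 : l * m ≤ 2 ^ (1-α) * (l * m) :=
      le_mul_of_one_le_left (mul_nonneg hl0 hm0) hK1
    have e3 : l - l * l ≤ l * m := by rw [hm]; ring_nf; exact le_rfl
    linarith [e1, e2, e3]
  -- max over Icc
  have hmle : m ≤ 1 := by linarith
  obtain ⟨u₀, hu₀m, hmax⟩ := isCompact_Icc.exists_isMaxOn (Set.nonempty_Icc.2 hmle)
    (fun x _ => ((hder x).continuousAt).continuousWithinAt)
  have hmain : φ u₀ ≤ 2 ^ (1-α) * (l * m) := by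
    rcases eq_or_lt_of_le hu₀m.1 with he | hlt
    · rw [← he]; exact hφm
    rcases eq_or_lt_of_le hu₀m.2 with he | hlt1
    · rw [he]; exact hφ1
    -- interior critical point
    have hnh : Set.Icc m 1 ∈ nhds u₀ := Icc_mem_nhds hlt hlt1
    have hd0 := (hmax.isLocalMax hnh).deriv_eq_zero
    rw [(hder u₀).deriv] at hd0
    have hα' : p - 1 = α := by rw [hp]; ring
    rw [hα'] at hd0
    have h' : p * (l * u₀ ^ α - (m * (1-u₀) ^ α + (u₀-m) ^ α)) = 0 := by
      linear_combination hd0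
    have hcrit : l * u₀ ^ α = m * (1-u₀) ^ α + (u₀ - m) ^ α := by
      have := (mul_eq_zero.1 h').resolve_left (ne_of_gt hp0)
      linarith
    have hu₀pos : 0 < u₀ := by linarith
    have h1u : 0 < 1 - u₀ := by linarith
    have hum : 0 < u₀ - m := by linarith
    have hval : φ u₀ = m * ((1-u₀) ^ α + (u₀-m) ^ α) := by
      simp only [hφ, hp]
      rw [rpow_one_add'' hu₀pos.le hα, rpow_one_add'' h1u.le hα, rpow_one_add'' hum.le hα]
      linear_combination u₀ * hcrit
    have h2 : (1-u₀) ^ α + (u₀-m) ^ α = l * ((1-u₀) ^ α + u₀ ^ α) := by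
      linear_combination (-1 : ℝ) * hcrit + (-(1-u₀) ^ α) * hm
    have h3 := two_point hα hα1 h1u.le hu₀pos.le
    rw [show (1 - u₀ + u₀ : ℝ) = 1 by ring, Real.one_rpow, mul_one] at h3
    rw [hval, h2]
    have hmul := mul_le_mul_of_nonneg_left h3 (mul_nonneg hm0 hl0)
    linarith [hmul]
  have hfin := le_trans (hmax ⟨hu, hu1⟩) hmain
  simpa only [hφ] using hfin

lemma star_norm {α l a : ℝ} (hα : 0 < α) (hα1 : α ≤ 1)
    (hl0 : 0 ≤ l) (hl1 : l ≤ 1) (ha0 : 0 ≤ a) (ha1 : a ≤ 1) :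
    l * a ^ (1+α) + (1-l) * (1-a) ^ (1+α) - |a - (1-l)| ^ (1+α)
      ≤ 2 ^ (1-α) * (l * (1-l)) := by
  rcases le_total (1-l) a with hc | hc
  · rw [abs_of_nonneg (by linarith)]
    exact star_half hα hα1 hl0 hl1 hc ha1
  · rw [abs_of_nonpos (by linarith)]
    have := star_half (l := 1-l) (u := 1-a) hα hα1 (by linarith) (by linarith)
      (by linarith) (by linarith)
    rw [show (1:ℝ) - (1-l) = l by ring, show (1:ℝ) - (1-a) = a by ring] at this
    calc l * a ^ (1+α) + (1-l) * (1-a) ^ (1+α) - (-(a - (1-l))) ^ (1+α)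
        = (1-l) * (1-a) ^ (1+α) + l * a ^ (1+α) - (1 - a - l) ^ (1+α) := by
          rw [show -(a - (1-l)) = 1 - a - l by ring]; ring
      _ ≤ 2 ^ (1-α) * ((1-l) * l) := this
      _ = 2 ^ (1-α) * (l * (1-l)) := by ring

lemma star_scaled {α l A B : ℝ} (hα : 0 < α) (hα1 : α ≤ 1)
    (hl0 : 0 ≤ l) (hl1 : l ≤ 1) (hA : 0 ≤ A) (hB : 0 ≤ B) :
    l * A ^ (1+α) + (1-l) * B ^ (1+α)
      ≤ |l * A - (1-l) * B| ^ (1+α) + 2 ^ (1-α) * (l * (1-l)) * (A + B) ^ (1+α) := by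
  set p : ℝ := 1 + α with hp
  rcases eq_or_lt_of_le (by linarith : (0:ℝ) ≤ A + B) with hc | hc
  · have hA0 : A = 0 := by linarith
    have hB0 : B = 0 := by linarith
    have hz : (0:ℝ) ^ p = 0 := Real.zero_rpow (by rw [hp]; linarith)
    rw [hA0, hB0]
    simp [hz]
  · set c : ℝ := A + B with hcdef
    set a : ℝ := A / c with hadef
    have hcne : c ≠ 0 := ne_of_gt hc
    have ha0 : 0 ≤ a := div_nonneg hA hc.le
    have ha1 : a ≤ 1 := by rw [hadef, div_le_one hc]; linarith
    have hAac : A = a * c := by rw [hadef]; field_simp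
    have hBac : B = (1 - a) * c := by rw [hadef]; field_simp; rw [hcdef]; ring
    have hcp : (0:ℝ) ≤ c ^ p := Real.rpow_nonneg hc.le p
    have hstar := star_norm (l := l) (a := a) hα hα1 hl0 hl1 ha0 ha1
    have hmul := mul_le_mul_of_nonneg_right hstar hcp
    have eA : A ^ p = a ^ p * c ^ p := by
      rw [hAac, Real.mul_rpow ha0 hc.le]
    have eB : B ^ p = (1-a) ^ p * c ^ p := by
      rw [hBac, Real.mul_rpow (by linarith) hc.le]
    have eR : |l * A - (1-l) * B| ^ p = |a - (1-l)| ^ p * c ^ p := by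
      have : |l * A - (1-l) * B| = |a - (1-l)| * c := by
        rw [hAac, hBac, show l * (a * c) - (1-l) * ((1-a) * c) = (a - (1-l)) * c by ring,
          abs_mul, abs_of_nonneg hc.le]
      rw [this, Real.mul_rpow (abs_nonneg _) hc.le]
    rw [eA, eB, eR]
    nlinarith [hmul]

theorem stmt_15 {X : Type*} [NormedAddCommGroup X] [InnerProductSpace ℝ X]
    (α : ℝ) (hα : 0 < α) (hα1 : α ≤ 1) :
    ∀ (z h : X), ∀ l ∈ Icc (0:ℝ) 1,
      l * (‖z + (1 - l) • h‖ ^ (1 + α) / (1 + α))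
        + (1 - l) * (‖z - l • h‖ ^ (1 + α) / (1 + α))
        - ‖z‖ ^ (1 + α) / (1 + α)
      ≤ 2 ^ (1 - α) * (l * (1 - l)) * (‖h‖ ^ (1 + α) / (1 + α)) := by
  intro z h l hl
  obtain ⟨hl0, hl1⟩ := hl
  set p : ℝ := 1 + α with hp
  have hp0 : (0:ℝ) < p := by rw [hp]; linarith
  set A : ℝ := ‖z + (1 - l) • h‖ with hA
  set B : ℝ := ‖z - l • h‖ with hB
  set D : ℝ := ‖h‖ with hD
  set N : ℝ := ‖z‖ with hN
  have hA0 : 0 ≤ A := norm_nonneg _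
  have hB0 : 0 ≤ B := norm_nonneg _
  have hD0 : 0 ≤ D := norm_nonneg _
  have hN0 : 0 ≤ N := norm_nonneg _
  -- the parallelogram-type identity
  have e1 : A ^ 2 = N ^ 2 + 2 * (1-l) * (inner ℝ z h : ℝ) + (1-l)^2 * D ^ 2 := by
    rw [hA, hN, hD, norm_add_sq_real, real_inner_smul_right, norm_smul]
    rw [Real.norm_eq_abs, mul_pow, sq_abs]
    ring
  have e2 : B ^ 2 = N ^ 2 - 2 * l * (inner ℝ z h : ℝ) + l^2 * D ^ 2 := by
    rw [hB, hN, hD, norm_sub_sq_real, real_inner_smul_right, norm_smul]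
    rw [Real.norm_eq_abs, mul_pow, sq_abs]
    ring
  have hid : N ^ 2 = l * A ^ 2 + (1-l) * B ^ 2 - l * (1-l) * D ^ 2 := by
    linear_combination (-l) * e1 + (-(1-l)) * e2
  clear e1 e2
  -- triangle: D ≤ A + B
  have htri : D ≤ A + B := by
    have hh : h = (z + (1 - l) • h) - (z - l • h) := by
      rw [sub_sub_eq_add_sub, add_sub_right_comm, add_sub_cancel_left, ← add_smul]
      rw [show (1 - l) + l = (1:ℝ) by ring, one_smul]
    calc D = ‖(z + (1 - l) • h) - (z - l • h)‖ := by rw [hD]; exact congrArg norm hh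
    _ ≤ A + B := norm_sub_le _ _
  clear_value A B D N
  clear hA hB hD hN
  -- reduce to the key inequality
  suffices key : l * A ^ p + (1-l) * B ^ p - N ^ p ≤ 2 ^ (1-α) * (l * (1-l)) * D ^ p by
    have expand : l * (A ^ p / p) + (1-l) * (B ^ p / p) - N ^ p / p
        = (l * A ^ p + (1-l) * B ^ p - N ^ p) / p := by ring
    have expand2 : 2 ^ (1-α) * (l * (1-l)) * (D ^ p / p)
        = (2 ^ (1-α) * (l * (1-l)) * D ^ p) / p := by ring
    rw [expand, expand2]
    gcongr
  -- degenerate case A + B = 0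
  rcases eq_or_lt_of_le (by linarith : (0:ℝ) ≤ A + B) with hc | hc
  · have hA' : A = 0 := by linarith
    have hB' : B = 0 := by linarith
    have hD' : D = 0 := by linarith
    have hN2 : N ^ 2 = 0 := by rw [hid, hA', hB', hD']; ring
    have hN' : N = 0 := pow_eq_zero_iff (n := 2) (by norm_num) |>.1 hN2
    rw [hA', hB', hD', hN', Real.zero_rpow (ne_of_gt hp0)]
    simp
  -- main case
  obtain ⟨c, hcdef⟩ : ∃ c : ℝ, c = A + B := ⟨_, rfl⟩
  rw [← hcdef] at hc htri
  obtain ⟨s, hs⟩ : ∃ s : ℝ, s = p / 2 := ⟨_, rfl⟩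
  have hs0 : 0 ≤ s := by rw [hs]; positivity
  have hs1 : s ≤ 1 := by rw [hs, hp]; linarith
  obtain ⟨θ, hθ⟩ : ∃ θ : ℝ, θ = D ^ 2 / c ^ 2 := ⟨_, rfl⟩
  have hθ0 : 0 ≤ θ := by rw [hθ]; positivity
  have hθ1 : θ ≤ 1 := by
    rw [hθ, div_le_one (by positivity)]
    nlinarith [htri, hD0]
  have hcne : c ≠ 0 := ne_of_gt hc
  obtain ⟨Q, hQ⟩ : ∃ Q : ℝ, Q = l * A ^ 2 + (1-l) * B ^ 2 := ⟨_, rfl⟩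
  obtain ⟨R, hR⟩ : ∃ R : ℝ, R = (l * A - (1-l) * B) ^ 2 := ⟨_, rfl⟩
  have hQ0 : 0 ≤ Q := by
    rw [hQ]
    exact add_nonneg (mul_nonneg hl0 (sq_nonneg _)) (mul_nonneg (by linarith) (sq_nonneg _))
  have hR0 : 0 ≤ R := by rw [hR]; exact sq_nonneg _
  -- N² as convex combination of Q and R
  have hθc : θ * c ^ 2 = D ^ 2 := by rw [hθ]; field_simp
  have hQR : Q - R = l * (1-l) * c ^ 2 := by rw [hQ, hR, hcdef]; ring
  have hcomb : N ^ 2 = (1-θ) * Q + θ * R := by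
    linear_combination hid + θ * hQR + l * (1-l) * hθc - hQ
  -- rpow facts: x^p = (x^2)^s for x ≥ 0
  have sq_rpow : ∀ x : ℝ, 0 ≤ x → (x ^ 2) ^ s = x ^ p := by
    intro x hx
    rw [show (x ^ 2 : ℝ) = x ^ (2:ℝ) by rw [Real.rpow_two],
      ← Real.rpow_mul hx, show (2:ℝ) * s = p by rw [hs]; ring]
  -- Jensen: E ≤ Q^s
  have hE : l * A ^ p + (1-l) * B ^ p ≤ Q ^ s := by
    have := jensen2 (s := s) (w := l) (v := 1-l) (a := A ^ 2) (b := B ^ 2)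
      hs0 hs1 hl0 (by linarith) (by ring) (sq_nonneg A) (sq_nonneg B)
    rwa [sq_rpow A hA0, sq_rpow B hB0, ← hQ] at this
  -- Jensen: (1-θ) Q^s + θ R^s ≤ N^p
  have hNlow : (1-θ) * Q ^ s + θ * R ^ s ≤ N ^ p := by
    have := jensen2 (s := s) (w := 1-θ) (v := θ) (a := Q) (b := R)
      hs0 hs1 (by linarith) hθ0 (by ring) hQ0 hR0
    rwa [← hcomb, sq_rpow N hN0] at this
  -- star inequality
  have hRs : R ^ s = |l * A - (1-l) * B| ^ p := by
    rw [hR, ← sq_abs, sq_rpow _ (abs_nonneg _)]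
  have hstar : l * A ^ p + (1-l) * B ^ p ≤ R ^ s + 2 ^ (1-α) * (l * (1-l)) * c ^ p := by
    rw [hRs, hcdef, hp]
    exact star_scaled hα hα1 hl0 hl1 hA0 hB0
  -- θ * c^p ≤ D^p
  have hθcp : θ * c ^ p ≤ D ^ p := by
    rcases eq_or_lt_of_le hD0 with hDz | hDz
    · rw [hθ, ← hDz, Real.zero_rpow (ne_of_gt hp0)]
      simp
    · have hcp2 : c ^ p = c ^ 2 * c ^ (p - 2) := by
        rw [show (c ^ 2 : ℝ) = c ^ (2:ℝ) by rw [Real.rpow_two],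
          ← Real.rpow_add hc, show (2:ℝ) + (p - 2) = p by ring]
      have hmono : c ^ (p - 2) ≤ D ^ (p - 2) :=
        Real.rpow_le_rpow_of_nonpos hDz htri (by rw [hp]; linarith)
      have hDp2 : D ^ p = D ^ 2 * D ^ (p - 2) := by
        rw [show (D ^ 2 : ℝ) = D ^ (2:ℝ) by rw [Real.rpow_two],
          ← Real.rpow_add hDz, show (2:ℝ) + (p - 2) = p by ring]
      calc θ * c ^ p = D ^ 2 * c ^ (p - 2) := by
            rw [hθ, hcp2]; field_simp
      _ ≤ D ^ 2 * D ^ (p - 2) := mul_le_mul_of_nonneg_left hmono (by positivity)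
      _ = D ^ p := hDp2.symm
  -- assemble
  have hKlm : 0 ≤ (2:ℝ) ^ (1-α) * (l * (1-l)) :=
    mul_nonneg (Real.rpow_nonneg (by norm_num) _) (mul_nonneg hl0 (by linarith))
  have step1 : l * A ^ p + (1-l) * B ^ p - N ^ p
      ≤ (1-θ) * ((l * A ^ p + (1-l) * B ^ p) - Q ^ s)
        + θ * ((l * A ^ p + (1-l) * B ^ p) - R ^ s) := by
    nlinarith [hNlow]
  have step2 : (1-θ) * ((l * A ^ p + (1-l) * B ^ p) - Q ^ s) ≤ 0 :=
    mul_nonpos_of_nonneg_of_nonpos (by linarith) (by linarith [hE])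
  have step3 : θ * ((l * A ^ p + (1-l) * B ^ p) - R ^ s)
      ≤ θ * (2 ^ (1-α) * (l * (1-l)) * c ^ p) :=
    mul_le_mul_of_nonneg_left (by linarith [hstar]) hθ0
  have step4 : θ * (2 ^ (1-α) * (l * (1-l)) * c ^ p)
      ≤ 2 ^ (1-α) * (l * (1-l)) * D ^ p := by
    calc θ * (2 ^ (1-α) * (l * (1-l)) * c ^ p)
        = 2 ^ (1-α) * (l * (1-l)) * (θ * c ^ p) := by ring
    _ ≤ 2 ^ (1-α) * (l * (1-l)) * D ^ p := mul_le_mul_of_nonneg_left hθcp hKlm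
  linarith [step1, step2, step3, step4]
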